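/- In the discrete Heisenberg group H₃, any word with letters in {a,b} representing c^z b^y a^x satisfies 0 ≤ z ≤ xy, x ≥ 0, y ≥ 0, and the word has length x + y. -/

import Mathlib

/-- The discrete Heisenberg group `H₃`: `⟨x, y, z⟩` encodes the 3×3 upper unitriangular
integer matrix `(1 x z; 0 1 y; 0 0 1)`, with matrix multiplication. -/
@[ext] structure Heis where
  x : ℤ
  y : ℤ
  z : ℤ

namespace Heis

instance : Mul Heis := ⟨fun p q => ⟨p.x + q.x, p.y + q.y, p.z + q.z + p.x * q.y⟩⟩
instance : One Heis := ⟨⟨0, 0, 0⟩⟩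
instance : Inv Heis := ⟨fun p => ⟨-p.x, -p.y, p.x * p.y - p.z⟩⟩

theorem mul_def (p q : Heis) :
    p * q = ⟨p.x + q.x, p.y + q.y, p.z + q.z + p.x * q.y⟩ := rfl
theorem one_def : (1 : Heis) = ⟨0, 0, 0⟩ := rfl
theorem inv_def (p : Heis) : p⁻¹ = ⟨-p.x, -p.y, p.x * p.y - p.z⟩ := rfl

instance : Group Heis where
  mul_assoc p q r := by
    simp only [mul_def, mk.injEq]
    refine ⟨by ring, by ring, by ring⟩
  one_mul p := by
    obtain ⟨px, py, pz⟩ := p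
    simp only [one_def, mul_def, mk.injEq]
    refine ⟨by ring, by ring, by ring⟩
  mul_one p := by
    obtain ⟨px, py, pz⟩ := p
    simp only [one_def, mul_def, mk.injEq]
    refine ⟨by ring, by ring, by ring⟩
  inv_mul_cancel p := by
    obtain ⟨px, py, pz⟩ := p
    simp only [inv_def, mul_def, one_def, mk.injEq]
    refine ⟨by ring, by ring, by ring⟩

/-- The generator `a` (the elementary matrix with a `1` in position (1,2)). -/
def a : Heis := ⟨1, 0, 0⟩
/-- The generator `b` (the elementary matrix with a `1` in position (2,3)). -/
def b : Heis := ⟨0, 1, 0⟩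
/-- The commutator `c = [a,b] = a⁻¹b⁻¹ab` (the elementary matrix with a `1` in (1,3)). -/
def c : Heis := ⟨0, 0, 1⟩

/-- The standard generating set `S = {a, b, a⁻¹, b⁻¹}`. -/
def S : Set Heis := {a, b, a⁻¹, b⁻¹}

/-- The word metric for the generating set `S`: the length of the shortest word with
letters in `S` leading from `g` to `h` in the Cayley graph. -/
noncomputable def wdist (g h : Heis) : ℕ :=
  sInf {n | ∃ l : List Heis, (∀ s ∈ l, s ∈ S) ∧ l.length = n ∧ g * l.prod = h}


theorem zpow_gen (u : Heis) (hz : u.z = 0) (hxy : u.x * u.y = 0) (n : ℤ) :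
    u ^ n = ⟨n * u.x, n * u.y, 0⟩ := by
  induction n using Int.induction_on with
  | zero => simp [one_def]
  | succ k ih =>
    rw [zpow_add_one, ih, mul_def]
    ext <;> simp <;> push_cast <;> nlinarith [hxy, hz]
  | pred k ih =>
    rw [zpow_sub_one, ih, inv_def, mul_def]
    ext <;> simp <;> push_cast <;> nlinarith [hxy, hz]

theorem a_zpow (n : ℤ) : a ^ n = ⟨n, 0, 0⟩ := by
  rw [zpow_gen a rfl (by simp [a]) n]; simp [a]

theorem b_zpow (n : ℤ) : b ^ n = ⟨0, n, 0⟩ := by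
  rw [zpow_gen b rfl (by simp [b]) n]; simp [b]

theorem c_zpow (n : ℤ) : c ^ n = ⟨0, 0, n⟩ := by
  induction n using Int.induction_on with
  | zero => simp [one_def]
  | succ k ih => rw [zpow_add_one, ih]; ext <;> simp [c, mul_def]
  | pred k ih => rw [zpow_sub_one, ih]; ext <;> simp [c, inv_def, mul_def] <;> ring

theorem key (w : List Heis) (hw : ∀ s ∈ w, s = a ∨ s = b) :
    0 ≤ w.prod.z ∧ w.prod.z ≤ w.prod.x * w.prod.y ∧ 0 ≤ w.prod.x ∧ 0 ≤ w.prod.y ∧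
      (w.length : ℤ) = w.prod.x + w.prod.y := by
  induction w with
  | nil => simp [one_def]
  | cons s t ih =>
    obtain ⟨h1, h2, h3, h4, h5⟩ := ih (fun s hs => hw s (List.mem_cons_of_mem _ hs))
    rcases hw s List.mem_cons_self with rfl | rfl <;>
      simp [List.prod_cons, a, b, mul_def] <;> push_cast <;>
      refine ⟨by nlinarith, by nlinarith, by nlinarith, by nlinarith, by linarith⟩

end Heis

open Heis in
/-- Any word with letters in `{a,b}` representing `c^z b^y a^x` satisfies
`0 ≤ z ≤ xy`, `x ≥ 0`, `y ≥ 0`, and has length `x + y`. -/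
theorem stmt11 (w : List Heis) (hw : ∀ s ∈ w, s = a ∨ s = b)
    (x y z : ℤ) (hrep : w.prod = c ^ z * b ^ y * a ^ x) :
    0 ≤ z ∧ z ≤ x * y ∧ 0 ≤ x ∧ 0 ≤ y ∧ (w.length : ℤ) = x + y := by
  have hk := key w hw
  rw [hrep, c_zpow, b_zpow, a_zpow] at hk
  simp only [mul_def] at hk
  obtain ⟨h1, h2, h3, h4, h5⟩ := hk
  refine ⟨by linarith, by nlinarith, by linarith, by linarith, by linarith⟩
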